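/- Hard-instance construction: let n > 1 and let π' be a permutation of {1,…,2n}. Define π to be the concatenation of π'_1 = ⟨π'(1),…,π'(n)⟩, π'_2 = ⟨4n, 4n−1, …, 2n+2⟩, π'_3 = ⟨π'(n+1),…,π'(2n)⟩, and π'_4 = ⟨2n+1⟩, in this order. Then π is a permutation of {1,…,4n} and lis(π) = lis(π') + 1. -/

import Mathlib

/-- Length of a longest strictly increasing subsequence of a list. -/
noncomputable def lisL {α : Type*} [LT α] (l : List α) : ℕ :=
  sSup {m | ∃ t : List α, t.Sublist l ∧ t.Pairwise (· < ·) ∧ t.length = m}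

private lemma lisL_exists {α : Type*} [LT α] (l : List α) :
    ∃ t : List α, t.Sublist l ∧ t.Pairwise (· < ·) ∧ t.length = lisL l := by
  have hne : ({m | ∃ t : List α, t.Sublist l ∧ t.Pairwise (· < ·) ∧ t.length = m}).Nonempty :=
    ⟨0, [], List.nil_sublist l, List.Pairwise.nil, rfl⟩
  have hbdd : BddAbove {m | ∃ t : List α, t.Sublist l ∧ t.Pairwise (· < ·) ∧ t.length = m} :=
    ⟨l.length, fun m ⟨t, ht, _, hl⟩ => hl ▸ ht.length_le⟩
  exact Nat.sSup_mem hne hbdd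

private lemma le_lisL {α : Type*} [LT α] {l t : List α} (ht : t.Sublist l)
    (hs : t.Pairwise (· < ·)) : t.length ≤ lisL l := by
  have hbdd : BddAbove {m | ∃ t : List α, t.Sublist l ∧ t.Pairwise (· < ·) ∧ t.length = m} :=
    ⟨l.length, fun m ⟨t, ht, _, hl⟩ => hl ▸ ht.length_le⟩
  exact le_csSup hbdd ⟨t, ht, hs, rfl⟩

/-- Hard-instance construction: for `n > 1` and a permutation `π'` of `{1, …, 2n}`,
the concatenation `π` of the first half of `π'`, the decreasing block
`⟨4n, 4n-1, …, 2n+2⟩`, the second half of `π'`, and `⟨2n+1⟩` is a permutation of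
`{1, …, 4n}` with `lis π = lis π' + 1`. -/
theorem hard_instance {n : ℕ} (hn : 1 < n) (π' : List ℕ)
    (hperm : π'.Perm (List.range' 1 (2 * n)))
    (π : List ℕ)
    (hπ : π = π'.take n ++ (List.range' (2 * n + 2) (2 * n - 1)).reverse ++
      π'.drop n ++ [2 * n + 1]) :
    π.Perm (List.range' 1 (4 * n)) ∧ lisL π = lisL π' + 1 := by
  set A := π'.take n with hA
  set C := π'.drop n with hC
  set B := List.range' (2 * n + 2) (2 * n - 1) with hB
  -- membership facts
  have hmemπ' : ∀ x ∈ π', x ≤ 2 * n := by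
    intro x hx
    have := (hperm.mem_iff).mp hx
    have := List.mem_range'_1.mp this
    omega
  have hBmem : ∀ x ∈ B.reverse, 2 * n + 2 ≤ x := by
    intro x hx
    rw [List.mem_reverse] at hx
    have := List.mem_range'_1.mp hx
    omega
  have hBgt : B.reverse.Pairwise (· > ·) := by
    rw [List.pairwise_reverse]
    exact List.pairwise_lt_range' 1
  -- the range splits
  have h5 : List.range' (2 * n + 1) (2 * n) = (2 * n + 1) :: B := by
    rw [hB]
    obtain ⟨m, hm⟩ : ∃ m, 2 * n = m + 1 := ⟨2 * n - 1, by omega⟩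
    rw [hm, List.range'_succ]
    congr 1 <;> omega
  have hsplit : List.range' 1 (4 * n) =
      List.range' 1 (2 * n) ++ ((2 * n + 1) :: B) := by
    rw [show (4 : ℕ) * n = 2 * n + 2 * n from by ring,
      ← List.range'_append (s := 1) (m := 2 * n) (n := 2 * n) (step := 1)]
    congr 1
    rw [show 1 + 1 * (2 * n) = 2 * n + 1 from by ring]
    exact h5
  constructor
  · -- permutation
    rw [← Multiset.coe_eq_coe, hπ, hsplit]
    have htd : (↑A + ↑C : Multiset ℕ) = ↑(List.range' 1 (2 * n)) := by
      rw [Multiset.coe_add, hA, hC, List.take_append_drop]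
      exact Multiset.coe_eq_coe.mpr hperm
    have hcons : (↑((2 * n + 1) :: B) : Multiset ℕ) = ↑[2 * n + 1] + ↑B :=
      (Multiset.coe_add [2 * n + 1] B).symm
    simp only [← Multiset.coe_add, Multiset.coe_reverse, hcons, ← htd]
    abel
  · -- lis
    apply le_antisymm
    · -- upper bound
      obtain ⟨t, ht, hts, htl⟩ := lisL_exists π
      rw [← htl]
      rw [hπ] at ht
      obtain ⟨u, t4, rfl, hu, h4⟩ := List.sublist_append_iff.mp ht
      obtain ⟨v, t3, rfl, hv, h3⟩ := List.sublist_append_iff.mp hu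
      obtain ⟨t1, t2, rfl, h1, h2⟩ := List.sublist_append_iff.mp hv
      simp only [List.pairwise_append, List.mem_append] at hts
      obtain ⟨⟨⟨hp1, hp2, h12⟩, hp3, h123⟩, hp4, h1234⟩ := hts
      have ht4len : t4.length ≤ 1 := h4.length_le
      have ht1sub : t1.Sublist π' := h1.trans (List.take_sublist n π')
      have ht1lis : t1.length ≤ lisL π' := le_lisL ht1sub hp1
      match t2 with
      | [] =>
        -- t1 ++ t3 is an increasing sublist of π'
        have hsub : (t1 ++ t3).Sublist π' := by
          have := h1.append h3
          rwa [hA, hC, List.take_append_drop] at this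
        have hsort : (t1 ++ t3).Pairwise (· < ·) := by
          rw [List.pairwise_append]
          exact ⟨hp1, hp3, fun a ha b hb => h123 a (Or.inl ha) b hb⟩
        have := le_lisL hsub hsort
        simp only [List.length_append, List.append_nil, List.length_nil] at *
        omega
      | b :: rest =>
        have hbB : 2 * n + 2 ≤ b := hBmem b (h2.subset (List.mem_cons_self))
        -- rest = []
        have hrest : rest = [] := by
          match rest with
          | [] => rfl
          | y :: _ =>
            have hlt : b < y := (List.pairwise_cons.mp hp2).1 y (List.mem_cons_self)
            have hgt : b > y := (List.pairwise_cons.mp (List.Pairwise.sublist h2 hBgt)).1 y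
              (List.mem_cons_self)
            omega
        subst hrest
        -- t3 = []
        have ht3 : t3 = [] := by
          rw [List.eq_nil_iff_forall_not_mem]
          intro c hc
          have hlt : b < c := h123 b (Or.inr (List.mem_cons_self)) c hc
          have : c ≤ 2 * n := hmemπ' c (List.drop_subset n π' (h3.subset hc))
          omega
        subst ht3
        -- t4 = []
        have ht4 : t4 = [] := by
          rcases List.sublist_singleton.mp h4 with h | h
          · exact h
          · exfalso
            have hlt : b < 2 * n + 1 :=
              h1234 b (Or.inl (Or.inr (List.mem_cons_self))) (2 * n + 1)
                (h ▸ List.mem_cons_self)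
            omega
        subst ht4
        simp only [List.length_append, List.length_cons, List.length_nil]
        omega
    · -- lower bound
      obtain ⟨t, ht, hts, htl⟩ := lisL_exists π'
      have htsub : t.Sublist (A ++ C) := by
        rw [hA, hC, List.take_append_drop]; exact ht
      obtain ⟨t1, t2, rfl, h1, h2⟩ := List.sublist_append_iff.mp htsub
      have hcand : ((t1 ++ t2) ++ [2 * n + 1]).Sublist π := by
        rw [hπ]
        refine List.Sublist.append ?_ (List.Sublist.refl _)
        exact (h1.trans (List.sublist_append_left A B.reverse)).append h2
      have hsort : ((t1 ++ t2) ++ [2 * n + 1]).Pairwise (· < ·) := by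
        rw [List.pairwise_append]
        refine ⟨hts, List.pairwise_singleton _ _, ?_⟩
        intro a ha b hb
        rw [List.mem_singleton] at hb
        subst hb
        have : a ≤ 2 * n := hmemπ' a (ht.subset ha)
        omega
      have := le_lisL hcand hsort
      simp only [List.length_append, List.length_singleton] at this
      rw [← htl]
      simpa using this
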